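/- Let n = 3, s = 1, π_1 = π_2 = π_3 = 1, a_{13} = a_{32} = a_{21} = 1, a_{10}, a_{20}, a_{30} > 0, and all other coefficients a_{ij} = 0. Let 0 < ε < 1/2 and define u⁰ = (u₁⁰, u₂⁰, u₃⁰) on (0,1) by u₁⁰(x) = a_{20}(2a_{20} + a_{30})/(8a_{20} + 4a_{30}); u₂⁰(x) = 4a_{20} for 0 < x < 1/2, u₂⁰(x) = a_{20}(4 − ε^{-1}(x − 1/2)) for 1/2 < x < 1/2 + ε, u₂⁰(x) = 3a_{20} for 1/2 + ε < x < 1; u₃⁰(x) = 8a_{20} + 4a_{30} for 0 < x < 1/2, u₃⁰(x) = a_{20}(8 + ε^{-1}(x − 1/2)) + 4a_{30} for 1/2 < x < 1/2 + ε, u₃⁰(x) = 9a_{20} + 4a_{30} for 1/2 + ε < x < 1. Then the entropy production ∫₀¹ (∂_x u⁰(x))ᵀ H(u⁰(x)) A(u⁰(x)) (∂_x u⁰(x)) dx ≤ −a_{20}²/(12ε), where ∂_x u⁰ denotes the (almost everywhere defined) derivative of the piecewise linear function u⁰. -/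

import Mathlib

open Finset Real

noncomputable section

/-- The diffusion matrix `A(u)`: `A_{ij}(u) = δ_{ij}(a_{i0} + Σ_k a_{ik} u_k^s) + s a_{ij} u_i u_j^{s-1}`. -/
def matA (n : ℕ) (s : ℝ) (a0 : Fin n → ℝ) (a : Fin n → Fin n → ℝ) (u : Fin n → ℝ) :
    Matrix (Fin n) (Fin n) ℝ :=
  Matrix.of fun i j =>
    (if i = j then a0 i + ∑ k, a i k * u k ^ s else 0) + s * a i j * u i * u j ^ (s - 1)

/-- The entropy Hessian `H(u)`: `H_{ij}(u) = δ_{ij} s π_i u_i^{s-2}`. -/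
def matH (n : ℕ) (s : ℝ) (P : Fin n → ℝ) (u : Fin n → ℝ) : Matrix (Fin n) (Fin n) ℝ :=
  Matrix.of fun i j => if i = j then s * P i * u i ^ (s - 2) else 0

/-- The quadratic form `zᵀ M z`. -/
def quad (n : ℕ) (M : Matrix (Fin n) (Fin n) ℝ) (z : Fin n → ℝ) : ℝ :=
  ∑ i, ∑ j, z i * M i j * z j

open MeasureTheory

set_option maxHeartbeats 1000000 in
theorem stmt17 (ε : ℝ) (hε : 0 < ε) (hε2 : ε < 1 / 2)
    (a10 a20 a30 : ℝ) (ha10 : 0 < a10) (ha20 : 0 < a20) (ha30 : 0 < a30)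
    (a : Fin 3 → Fin 3 → ℝ) (ha : a = ![![0, 0, 1], ![1, 0, 0], ![0, 1, 0]])
    (a0 : Fin 3 → ℝ) (ha0 : a0 = ![a10, a20, a30])
    (U : ℝ → Fin 3 → ℝ)
    (hU : U = fun x => ![
      a20 * (2 * a20 + a30) / (8 * a20 + 4 * a30),
      if x < 1 / 2 then 4 * a20
        else if x < 1 / 2 + ε then a20 * (4 - ε⁻¹ * (x - 1 / 2)) else 3 * a20,
      if x < 1 / 2 then 8 * a20 + 4 * a30
        else if x < 1 / 2 + ε then a20 * (8 + ε⁻¹ * (x - 1 / 2)) + 4 * a30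
        else 9 * a20 + 4 * a30]) :
    ∫ x in Set.Ioo (0 : ℝ) 1,
        ∑ i, ∑ j, deriv (fun y => U y i) x
          * (matH 3 1 (fun _ => 1) (U x) * matA 3 1 a0 a (U x)) i j
          * deriv (fun y => U y j) x
      ≤ -(a20 ^ 2 / (12 * ε)) := by
  subst ha ha0 hU
  have hε' : ε ≠ 0 := ne_of_gt hε
  have hd : (0:ℝ) < 8 * a20 + 4 * a30 := by linarith
  set φ : ℝ → ℝ := fun x =>
    (a20 / ε) ^ 2 * ((5 * a20 / 4) / (a20 * (4 - ε⁻¹ * (x - 1/2)))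
      + (a30 + a20 * (4 - ε⁻¹ * (x - 1/2))) / (a20 * (8 + ε⁻¹ * (x - 1/2)) + 4 * a30) - 1)
    with hφ
  have hT : ∀ x ∈ Set.Icc (1/2 : ℝ) (1/2 + ε),
      0 ≤ ε⁻¹ * (x - 1/2) ∧ ε⁻¹ * (x - 1/2) ≤ 1 := by
    intro x hx
    refine ⟨mul_nonneg (by positivity) (by linarith [hx.1]), ?_⟩
    have h1 : x - 1/2 ≤ ε := by linarith [hx.2]
    calc ε⁻¹ * (x - 1/2) ≤ ε⁻¹ * ε := by
          exact mul_le_mul_of_nonneg_left h1 (by positivity)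
      _ = 1 := inv_mul_cancel₀ hε'
  have hu2pos : ∀ x ∈ Set.Icc (1/2 : ℝ) (1/2 + ε),
      0 < a20 * (4 - ε⁻¹ * (x - 1/2)) := by
    intro x hx
    obtain ⟨h1, h2⟩ := hT x hx
    nlinarith
  have hu3pos : ∀ x ∈ Set.Icc (1/2 : ℝ) (1/2 + ε),
      0 < a20 * (8 + ε⁻¹ * (x - 1/2)) + 4 * a30 := by
    intro x hx
    obtain ⟨h1, h2⟩ := hT x hx
    nlinarith
  have hnull : ∀ᵐ x : ℝ, x ∉ ({1/2, 1/2 + ε} : Set ℝ) := by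
    have h0 : volume ({1/2, 1/2 + ε} : Set ℝ) = 0 := (Set.to_countable _).measure_zero _
    exact measure_eq_zero_iff_ae_notMem.mp h0
  refine le_trans (le_of_eq (integral_congr_ae
      (g := fun x => (Set.Ioo (1/2 : ℝ) (1/2 + ε)).indicator φ x) ?_)) ?_
  · filter_upwards [ae_restrict_mem measurableSet_Ioo, ae_restrict_of_ae hnull] with x hx hx2
    simp only [Set.mem_insert_iff, Set.mem_singleton_iff, not_or] at hx2
    obtain ⟨hne1, hne2⟩ := hx2
    have d0 : deriv (fun _ : ℝ => a20 * (2 * a20 + a30) / (8 * a20 + 4 * a30)) x = 0 :=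
      deriv_const _ _
    rcases lt_trichotomy x (1/2) with hlt | heq | hgt
    · -- x < 1/2 : all derivatives vanish
      have m : Set.Iio (1/2 : ℝ) ∈ nhds x := Iio_mem_nhds hlt
      have d1 : deriv (fun y : ℝ => if y < 1/2 then 4 * a20
          else if y < 1/2 + ε then a20 * (4 - ε⁻¹ * (y - 1/2)) else 3 * a20) x = 0 := by
        have hev : (fun y : ℝ => if y < 1/2 then 4 * a20
            else if y < 1/2 + ε then a20 * (4 - ε⁻¹ * (y - 1/2)) else 3 * a20)
            =ᶠ[nhds x] fun _ => 4 * a20 := by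
          filter_upwards [m] with y hy
          rw [if_pos (show y < 1/2 from hy)]
        rw [hev.deriv_eq, deriv_const]
      have d2 : deriv (fun y : ℝ => if y < 1/2 then 8 * a20 + 4 * a30
          else if y < 1/2 + ε then a20 * (8 + ε⁻¹ * (y - 1/2)) + 4 * a30
          else 9 * a20 + 4 * a30) x = 0 := by
        have hev : (fun y : ℝ => if y < 1/2 then 8 * a20 + 4 * a30
            else if y < 1/2 + ε then a20 * (8 + ε⁻¹ * (y - 1/2)) + 4 * a30
            else 9 * a20 + 4 * a30) =ᶠ[nhds x] fun _ => 8 * a20 + 4 * a30 := by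
          filter_upwards [m] with y hy
          rw [if_pos (show y < 1/2 from hy)]
        rw [hev.deriv_eq, deriv_const]
      have hnm : x ∉ Set.Ioo (1/2 : ℝ) (1/2 + ε) := by
        simp only [Set.mem_Ioo, not_and_or, not_lt]
        left; linarith
      rw [Set.indicator_of_notMem hnm]
      simp only [Fin.sum_univ_three, Matrix.cons_val_zero, Matrix.cons_val_one,
        Matrix.head_cons, Matrix.cons_val_two, Matrix.tail_cons, d0, d1, d2]
      ring
    · exact absurd heq hne1
    · rcases lt_trichotomy x (1/2 + ε) with hlt' | heq' | hgt'
      · -- middle interval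
        have m : Set.Ioo (1/2 : ℝ) (1/2 + ε) ∈ nhds x := Ioo_mem_nhds hgt hlt'
        have d1 : deriv (fun y : ℝ => if y < 1/2 then 4 * a20
            else if y < 1/2 + ε then a20 * (4 - ε⁻¹ * (y - 1/2)) else 3 * a20) x
            = -(a20 * ε⁻¹) := by
          have hev : (fun y : ℝ => if y < 1/2 then 4 * a20
              else if y < 1/2 + ε then a20 * (4 - ε⁻¹ * (y - 1/2)) else 3 * a20)
              =ᶠ[nhds x] fun y => a20 * (4 - ε⁻¹ * (y - 1/2)) := by
            filter_upwards [m] with y hy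
            rw [if_neg (not_lt.mpr hy.1.le), if_pos hy.2]
          rw [hev.deriv_eq]
          have h : HasDerivAt (fun y : ℝ => a20 * (4 - ε⁻¹ * (y - 1/2)))
              (a20 * (-(ε⁻¹ * 1))) x :=
            ((((hasDerivAt_id x).sub_const (1/2)).const_mul ε⁻¹).const_sub 4).const_mul a20
          rw [h.deriv]; ring
        have d2 : deriv (fun y : ℝ => if y < 1/2 then 8 * a20 + 4 * a30
            else if y < 1/2 + ε then a20 * (8 + ε⁻¹ * (y - 1/2)) + 4 * a30
            else 9 * a20 + 4 * a30) x = a20 * ε⁻¹ := by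
          have hev : (fun y : ℝ => if y < 1/2 then 8 * a20 + 4 * a30
              else if y < 1/2 + ε then a20 * (8 + ε⁻¹ * (y - 1/2)) + 4 * a30
              else 9 * a20 + 4 * a30)
              =ᶠ[nhds x] fun y => a20 * (8 + ε⁻¹ * (y - 1/2)) + 4 * a30 := by
            filter_upwards [m] with y hy
            rw [if_neg (not_lt.mpr hy.1.le), if_pos hy.2]
          rw [hev.deriv_eq]
          have h : HasDerivAt (fun y : ℝ => a20 * (8 + ε⁻¹ * (y - 1/2)) + 4 * a30)
              (a20 * (ε⁻¹ * 1)) x :=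
            (((((hasDerivAt_id x).sub_const (1/2)).const_mul ε⁻¹).const_add 8).const_mul
              a20).add_const (4 * a30)
          rw [h.deriv]; ring
        have hmem : x ∈ Set.Ioo (1/2 : ℝ) (1/2 + ε) := ⟨hgt, hlt'⟩
        rw [Set.indicator_of_mem hmem]
        have hnx : ¬ x < 1/2 := not_lt.mpr hgt.le
        have hxe : x < 1/2 + ε := hlt'
        have h2 : a20 * (4 - ε⁻¹ * (x - 1/2)) ≠ 0 :=
          (hu2pos x ⟨hgt.le, hlt'.le⟩).ne'
        have h3 : a20 * (8 + ε⁻¹ * (x - 1/2)) + 4 * a30 ≠ 0 :=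
          (hu3pos x ⟨hgt.le, hlt'.le⟩).ne'
        simp only [Fin.sum_univ_three, Matrix.cons_val_zero, Matrix.cons_val_one,
          Matrix.head_cons, Matrix.cons_val_two, Matrix.tail_cons, if_neg hnx, if_pos hxe,
          d0, d1, d2, matH, matA, Matrix.mul_apply, Matrix.of_apply, Fin.isValue,
          zero_mul, mul_zero, zero_add, add_zero, hφ]
        simp only [show ((0:Fin 3) = 1) = False by decide, show ((0:Fin 3) = 2) = False by decide,
          show ((1:Fin 3) = 0) = False by decide, show ((1:Fin 3) = 2) = False by decide,
          show ((2:Fin 3) = 0) = False by decide, show ((2:Fin 3) = 1) = False by decide,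
          show ((0:Fin 3) = 0) = True by decide, show ((1:Fin 3) = 1) = True by decide,
          show ((2:Fin 3) = 2) = True by decide, if_true, if_false,
          show (1:ℝ) - 1 = 0 by norm_num, show (1:ℝ) - 2 = -1 by norm_num,
          Real.rpow_one, Real.rpow_zero, Real.rpow_neg_one,
          mul_one, one_mul, mul_zero, zero_mul, add_zero, zero_add]
        set t := ε⁻¹ * (x - 1/2) with ht
        field_simp
        ring
      · exact absurd heq' hne2
      · -- x > 1/2 + ε
        have m : Set.Ioi (1/2 + ε : ℝ) ∈ nhds x := Ioi_mem_nhds hgt'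
        have d1 : deriv (fun y : ℝ => if y < 1/2 then 4 * a20
            else if y < 1/2 + ε then a20 * (4 - ε⁻¹ * (y - 1/2)) else 3 * a20) x = 0 := by
          have hev : (fun y : ℝ => if y < 1/2 then 4 * a20
              else if y < 1/2 + ε then a20 * (4 - ε⁻¹ * (y - 1/2)) else 3 * a20)
              =ᶠ[nhds x] fun _ => 3 * a20 := by
            filter_upwards [m] with y hy
            have : ¬ y < 1/2 := by simp only [Set.mem_Ioi] at hy; push_neg; linarith
            have h2 : ¬ y < 1/2 + ε := by simp only [Set.mem_Ioi] at hy; push_neg; linarith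
            rw [if_neg this, if_neg h2]
          rw [hev.deriv_eq, deriv_const]
        have d2 : deriv (fun y : ℝ => if y < 1/2 then 8 * a20 + 4 * a30
            else if y < 1/2 + ε then a20 * (8 + ε⁻¹ * (y - 1/2)) + 4 * a30
            else 9 * a20 + 4 * a30) x = 0 := by
          have hev : (fun y : ℝ => if y < 1/2 then 8 * a20 + 4 * a30
              else if y < 1/2 + ε then a20 * (8 + ε⁻¹ * (y - 1/2)) + 4 * a30
              else 9 * a20 + 4 * a30) =ᶠ[nhds x] fun _ => 9 * a20 + 4 * a30 := by
            filter_upwards [m] with y hy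
            have h1 : ¬ y < 1/2 := by simp only [Set.mem_Ioi] at hy; push_neg; linarith
            have h2 : ¬ y < 1/2 + ε := by simp only [Set.mem_Ioi] at hy; push_neg; linarith
            rw [if_neg h1, if_neg h2]
          rw [hev.deriv_eq, deriv_const]
        have hnm : x ∉ Set.Ioo (1/2 : ℝ) (1/2 + ε) := by
          simp only [Set.mem_Ioo, not_and_or, not_lt]
          right; linarith
        rw [Set.indicator_of_notMem hnm]
        simp only [Fin.sum_univ_three, Matrix.cons_val_zero, Matrix.cons_val_one,
          Matrix.head_cons, Matrix.cons_val_two, Matrix.tail_cons, d0, d1, d2]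
        ring
  · -- integral of the indicator
    have hsub : Set.Ioo (1/2 : ℝ) (1/2 + ε) ⊆ Set.Ioo (0 : ℝ) 1 := by
      intro y hy
      exact ⟨by linarith [hy.1], by linarith [hy.2]⟩
    rw [setIntegral_indicator measurableSet_Ioo,
       Set.inter_eq_self_of_subset_right hsub]
    have hcont : ContinuousOn φ (Set.Icc (1/2 : ℝ) (1/2 + ε)) := by
      apply ContinuousOn.mul continuousOn_const
      apply ContinuousOn.sub _ continuousOn_const
      apply ContinuousOn.add
      · exact ContinuousOn.div continuousOn_const (by fun_prop)
          (fun x hx => (hu2pos x hx).ne')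
      · exact ContinuousOn.div (by fun_prop) (by fun_prop)
          (fun x hx => (hu3pos x hx).ne')
    have hφint : IntegrableOn φ (Set.Ioo (1/2 : ℝ) (1/2 + ε)) :=
      hcont.integrableOn_Icc.mono_set Set.Ioo_subset_Icc_self
    have key : ∀ x ∈ Set.Ioo (1/2 : ℝ) (1/2 + ε), φ x ≤ -(a20 ^ 2 / (12 * ε ^ 2)) := by
      intro x hx
      have hxI : x ∈ Set.Icc (1/2 : ℝ) (1/2 + ε) := ⟨hx.1.le, hx.2.le⟩
      obtain ⟨ht0, ht1⟩ := hT x hxI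
      have h2 := hu2pos x hxI
      have h3 := hu3pos x hxI
      have b1 : (5 * a20 / 4) / (a20 * (4 - ε⁻¹ * (x - 1/2))) ≤ 5 / 12 := by
        rw [div_le_div_iff₀ h2 (by norm_num)]
        nlinarith
      have b2 : (a30 + a20 * (4 - ε⁻¹ * (x - 1/2)))
          / (a20 * (8 + ε⁻¹ * (x - 1/2)) + 4 * a30) ≤ 1 / 2 := by
        rw [div_le_div_iff₀ h3 (by norm_num)]
        nlinarith
      have hb : (5 * a20 / 4) / (a20 * (4 - ε⁻¹ * (x - 1/2)))
          + (a30 + a20 * (4 - ε⁻¹ * (x - 1/2)))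
            / (a20 * (8 + ε⁻¹ * (x - 1/2)) + 4 * a30) - 1 ≤ -(1/12) := by
        linarith
      calc φ x ≤ (a20 / ε) ^ 2 * (-(1/12)) := by
            rw [hφ]
            exact mul_le_mul_of_nonneg_left hb (by positivity)
        _ = -(a20 ^ 2 / (12 * ε ^ 2)) := by
            field_simp
    calc ∫ x in Set.Ioo (1/2 : ℝ) (1/2 + ε), φ x
        ≤ ∫ _ in Set.Ioo (1/2 : ℝ) (1/2 + ε), -(a20 ^ 2 / (12 * ε ^ 2)) :=
          setIntegral_mono_on hφint ((integrableOn_const_iff).mpr (Or.inr (by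
            rw [Real.volume_Ioo]; exact ENNReal.ofReal_lt_top))) measurableSet_Ioo key
      _ = -(a20 ^ 2 / (12 * ε)) := by
          rw [setIntegral_const, Real.volume_real_Ioo_of_le (by linarith)]
          rw [show (1/2 + ε - 1/2 : ℝ) = ε by ring]
          rw [smul_eq_mul]
          field_simp
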